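/- Let S = ⟨A ∣ u → v⟩ be a left cancellative one-rule SRS, and let x →_S z_1 →_S y and x →_S z_2 →_S y be two two-step reductions from x to y. Let x̄ → z̄_1 → ȳ_1 and x̄ → z̄_2 → ȳ_2 be their lifts to the decorated SRS S̄ (starting from the undecorated word x). Then ȳ_1 and ȳ_2 contain decorated letters, and the position of the leftmost decorated letter of ȳ_1 equals the position of the leftmost decorated letter of ȳ_2. -/
import Mathlib


/-- One-step reduction of the one-rule SRS `⟨A ∣ u → v⟩`: `w →_S w'`. -/
def Step {A : Type*} (u v w w' : List A) : Prop :=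
  ∃ p q : List A, w = p ++ u ++ q ∧ w' = p ++ v ++ q

/-- One-step reduction of `⟨A ∣ u → v⟩` carried out at position `i`. -/
def StepAt {A : Type*} (u v : List A) (i : ℕ) (w w' : List A) : Prop :=
  ∃ p q : List A, p.length = i ∧ w = p ++ u ++ q ∧ w' = p ++ v ++ q

/-- The diamond graph `M_k` is embeddable in the reduction graph `G_S` of
`S = ⟨A ∣ u → v⟩`: there are pairwise distinct words `x, y, z_1, …, z_k`
with `x →_S z_i` and `z_i →_S y` for every `i`. -/
def MkEmbeddable {A : Type*} (u v : List A) (k : ℕ) : Prop :=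
  ∃ (x y : List A) (z : Fin k → List A),
    Function.Injective z ∧ (∀ i, x ≠ z i) ∧ (∀ i, y ≠ z i) ∧ x ≠ y ∧
    ∀ i, Step u v x (z i) ∧ Step u v (z i) y

/-- Projection from the decorated alphabet `A ⊕ A` (`inl a` = plain letter `a`,
`inr a` = decorated letter `a•`) back to `A`. -/
def proj {A : Type*} : A ⊕ A → A := Sum.elim id id

/-- One-step reduction of the decorated SRS `S̄` carried out at position `i`:
some word `ū` projecting to `u` is replaced by the fully decorated `v•`. -/
def DecStepAt {A : Type*} (u v : List A) (i : ℕ) (w w' : List (A ⊕ A)) : Prop :=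
  ∃ p q ubar : List (A ⊕ A),
    p.length = i ∧ ubar.map proj = u ∧
    w = p ++ ubar ++ q ∧ w' = p ++ v.map Sum.inr ++ q

/-- The leftmost decorated letter of `w` is at position `i`. -/
def FirstDecorated {A : Type*} (w : List (A ⊕ A)) (i : ℕ) : Prop :=
  (∃ a : A, w[i]? = some (Sum.inr a)) ∧
  ∀ j < i, ∀ a : A, w[j]? ≠ some (Sum.inr a)

/-- The one-rule SRS `⟨A ∣ u → v⟩` is left cancellative:
`u, v` are nonempty and their first letters are distinct. -/
def LeftCancellative {A : Type*} (u v : List A) : Prop :=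
  u ≠ [] ∧ v ≠ [] ∧ u.head? ≠ v.head?

/-- `w` is bordered with `T`: `T` is both a prefix and a suffix of `w`. -/
def Bordered {A : Type*} (T w : List A) : Prop :=
  T <+: w ∧ T <:+ w

/-- `T` is self-overlap-free: `OVL(T) = ∅`, i.e. there is no nonempty `w`
with `T = x ++ w = w ++ y` for nonempty `x, y`. -/
def SelfOverlapFree {A : Type*} (T : List A) : Prop :=
  ∀ w x y : List A, w ≠ [] → x ≠ [] → y ≠ [] → T = x ++ w → T = w ++ y → False

/-- `glue T [R₁, …, R_k] = T R₁ T R₂ ⋯ T R_k T`, the word of `Bord_T` whose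
canonical decomposition is `R₁, …, R_k`; thus `φ_T (glue T Rs) = Rs`
(a word of length `Rs.length` over the alphabet `B` of `T`-free words). -/
def glue {A : Type*} (T : List A) : List (List A) → List A
  | [] => T
  | R :: Rs => T ++ R ++ glue T Rs

lemma get_left (P s Q : List A) {j : ℕ} (hj : j < P.length) :
    (P ++ s ++ Q)[j]? = P[j]? := by
  rw [List.append_assoc, List.getElem?_append_left hj]

lemma get_mid (P s Q : List A) {j : ℕ} (hj : j < s.length) :
    (P ++ s ++ Q)[P.length + j]? = s[j]? := by
  rw [List.append_assoc, List.getElem?_append_right (Nat.le_add_right _ _),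
    Nat.add_sub_cancel_left, List.getElem?_append_left hj]

lemma head_pos {l : List A} (h : l ≠ []) : 0 < l.length :=
  List.length_pos_iff.mpr h

/-- p = q is impossible for two consecutive steps. -/
lemma steps_ne (u v : List A) (hlc : LeftCancellative u v)
    (x z y : List A) (p q : ℕ)
    (h₁ : StepAt u v p x z) (h₂ : StepAt u v q z y) : p ≠ q := by
  obtain ⟨hu, hv, hne⟩ := hlc
  obtain ⟨P, Q, hP, hx, hz⟩ := h₁
  obtain ⟨P', Q', hP', hz', hy⟩ := h₂
  intro hpq
  apply hne
  have e1 : z[p]? = v[0]? := by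
    rw [hz, ← hP]; simpa using get_mid P v Q (head_pos hv)
  have e2 : z[q]? = u[0]? := by
    rw [hz', ← hP']; simpa using get_mid P' u Q' (head_pos hu)
  rw [List.head?_eq_getElem?, List.head?_eq_getElem?, ← e2, ← e1, hpq]

/-- min p q is the first position where x and y differ. -/
lemma steps_diff (u v : List A) (hlc : LeftCancellative u v)
    (x z y : List A) (p q : ℕ)
    (h₁ : StepAt u v p x z) (h₂ : StepAt u v q z y) :
    (∀ j < min p q, x[j]? = y[j]?) ∧ x[min p q]? ≠ y[min p q]? := by
  have hpq := steps_ne u v hlc x z y p q h₁ h₂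
  obtain ⟨hu, hv, hne⟩ := hlc
  obtain ⟨P, Q, hP, hx, hz⟩ := h₁
  obtain ⟨P', Q', hP', hz', hy⟩ := h₂
  have hxz : ∀ j < p, x[j]? = z[j]? := fun j hj => by
    rw [hx, hz, get_left P u Q (hP ▸ hj), get_left P v Q (hP ▸ hj)]
  have hzy : ∀ j < q, z[j]? = y[j]? := fun j hj => by
    rw [hz', hy, get_left P' u Q' (hP' ▸ hj), get_left P' v Q' (hP' ▸ hj)]
  have hne' : u[0]? ≠ v[0]? := by
    rwa [← List.head?_eq_getElem?, ← List.head?_eq_getElem?]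
  constructor
  · intro j hj
    rw [hxz j (lt_of_lt_of_le hj (min_le_left _ _)),
      hzy j (lt_of_lt_of_le hj (min_le_right _ _))]
  · rcases lt_or_gt_of_ne hpq with h | h
    · rw [min_eq_left h.le]
      have e1 : x[p]? = u[0]? := by
        rw [hx, ← hP]; simpa using get_mid P u Q (head_pos hu)
      have e2 : y[p]? = v[0]? := by
        rw [← hzy p h, hz, ← hP]; simpa using get_mid P v Q (head_pos hv)
      rw [e1, e2]; exact hne'
    · rw [min_eq_right h.le]
      have e1 : x[q]? = u[0]? := by
        rw [hxz q h, hz', ← hP']; simpa using get_mid P' u Q' (head_pos hu)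
      have e2 : y[q]? = v[0]? := by
        rw [hy, ← hP']; simpa using get_mid P' v Q' (head_pos hv)
      rw [e1, e2]; exact hne'

/-- the first decorated letter of a two-step lift is at position min p q. -/
lemma dec_first (u v : List A) (hlc : LeftCancellative u v)
    (x z y : List A) (zbar ybar : List (A ⊕ A)) (p q : ℕ)
    (h₁ : StepAt u v p x z) (h₂ : StepAt u v q z y)
    (hb₁ : DecStepAt u v p (x.map Sum.inl) zbar)
    (hb₂ : DecStepAt u v q zbar ybar) :
    FirstDecorated ybar (min p q) := by
  have hpq := steps_ne u v hlc x z y p q h₁ h₂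
  obtain ⟨hu, hv, -⟩ := hlc
  obtain ⟨P, Q, ub, hP, hub, hx, hz⟩ := hb₁
  obtain ⟨P', Q', ub', hP', hub', hz', hy⟩ := hb₂
  -- zbar is undecorated before p
  have hzundec : ∀ j < p, ∀ a : A, zbar[j]? ≠ some (Sum.inr a) := by
    intro j hj a
    have : zbar[j]? = (x.map Sum.inl)[j]? := by
      rw [hz, hx, get_left P (v.map Sum.inr) Q (hP ▸ hj),
        get_left P ub Q (hP ▸ hj)]
    rw [this, List.getElem?_map]
    cases x[j]? <;> simp
  -- zbar is decorated at p
  have hzdec : zbar[p]? = some (Sum.inr (v.head hv)) := by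
    rw [hz, ← hP]
    have := get_mid P (v.map Sum.inr) Q (j := 0)
      (by simpa using head_pos hv)
    simpa [List.getElem?_map, ← List.head?_eq_getElem?,
      List.head?_eq_head hv] using this
  -- ybar agrees with zbar before q
  have hyz : ∀ j < q, ybar[j]? = zbar[j]? := fun j hj => by
    rw [hy, hz', get_left P' (v.map Sum.inr) Q' (hP' ▸ hj),
      get_left P' ub' Q' (hP' ▸ hj)]
  -- ybar decorated at q
  have hydec : ybar[q]? = some (Sum.inr (v.head hv)) := by
    rw [hy, ← hP']
    have := get_mid P' (v.map Sum.inr) Q' (j := 0)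
      (by simpa using head_pos hv)
    simpa [List.getElem?_map, ← List.head?_eq_getElem?,
      List.head?_eq_head hv] using this
  constructor
  · rcases lt_or_gt_of_ne hpq with h | h
    · rw [min_eq_left h.le]
      exact ⟨v.head hv, by rw [hyz p h, hzdec]⟩
    · rw [min_eq_right h.le]
      exact ⟨v.head hv, hydec⟩
  · intro j hj a
    rw [hyz j (lt_of_lt_of_le hj (min_le_right _ _))]
    exact hzundec j (lt_of_lt_of_le hj (min_le_left _ _)) a


/-- for a left cancellative `S` and two two-step reductions
`x → z₁ → y`, `x → z₂ → y` with lifts `x̄ → z̄₁ → ȳ₁`, `x̄ → z̄₂ → ȳ₂`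
(starting from the undecorated `x`), both `ȳ₁` and `ȳ₂` contain decorated
letters and their leftmost decorated letters are at the same position. -/
theorem same_first_decorated_position {A : Type*} (u v : List A)
    (hlc : LeftCancellative u v)
    (x z₁ z₂ y : List A) (zbar₁ zbar₂ ybar₁ ybar₂ : List (A ⊕ A))
    (p₁ q₁ p₂ q₂ : ℕ)
    (h₁ : StepAt u v p₁ x z₁) (h₂ : StepAt u v q₁ z₁ y)
    (h₃ : StepAt u v p₂ x z₂) (h₄ : StepAt u v q₂ z₂ y)
    (hb₁ : DecStepAt u v p₁ (x.map Sum.inl) zbar₁)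
    (hb₂ : DecStepAt u v q₁ zbar₁ ybar₁)
    (hb₃ : DecStepAt u v p₂ (x.map Sum.inl) zbar₂)
    (hb₄ : DecStepAt u v q₂ zbar₂ ybar₂)
    (hpz₁ : zbar₁.map proj = z₁) (hpy₁ : ybar₁.map proj = y)
    (hpz₂ : zbar₂.map proj = z₂) (hpy₂ : ybar₂.map proj = y) :
    ∃ i : ℕ, FirstDecorated ybar₁ i ∧ FirstDecorated ybar₂ i := by
  obtain ⟨ha₁, hd₁⟩ := steps_diff u v hlc x z₁ y p₁ q₁ h₁ h₂
  obtain ⟨ha₂, hd₂⟩ := steps_diff u v hlc x z₂ y p₂ q₂ h₃ h₄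
  have hmm : min p₁ q₁ = min p₂ q₂ := by
    rcases lt_trichotomy (min p₁ q₁) (min p₂ q₂) with h | h | h
    · exact absurd (ha₂ _ h) hd₁
    · exact h
    · exact absurd (ha₁ _ h) hd₂
  exact ⟨min p₁ q₁,
    dec_first u v hlc x z₁ y zbar₁ ybar₁ p₁ q₁ h₁ h₂ hb₁ hb₂,
    hmm ▸ dec_first u v hlc x z₂ y zbar₂ ybar₂ p₂ q₂ h₃ h₄ hb₃ hb₄⟩
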